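/- Let a, b, c, d be real numbers satisfying ac + bd = 0 and 1 + b² + d² = a² + c² + (ad−bc)². Then for every real t > 0, the complex number S(t) := −2(ac·(it) + bd) / (1 + (a²+c²)·(it) + (b²+d²) + (ad−bc)²·(it)) is well defined (the denominator is nonzero) and satisfies |S(t)|² = (2bd/(1+b²+d²))². In particular the transmission probability is independent of t. -/

import Mathlib

/-- Under the flat-passband design conditions `ac + bd = 0` and
`1 + b² + d² = a² + c² + (ad−bc)²`, for every `t > 0` the amplitude
`S(t) = −2(ac·(it)+bd)/(1+(a²+c²)·(it)+(b²+d²)+(ad−bc)²·(it))` is well defined and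
`|S(t)|² = (2bd/(1+b²+d²))²`, independently of `t`. -/
theorem flat_passband_transmission
    (a b c d : ℝ)
    (h1 : a * c + b * d = 0)
    (h2 : 1 + b ^ 2 + d ^ 2 = a ^ 2 + c ^ 2 + (a * d - b * c) ^ 2) :
    ∀ t : ℝ, 0 < t →
      ((1 : ℂ) + ((a ^ 2 + c ^ 2 : ℝ) : ℂ) * (Complex.I * t) + ((b ^ 2 + d ^ 2 : ℝ) : ℂ) +
          (((a * d - b * c) ^ 2 : ℝ) : ℂ) * (Complex.I * t)) ≠ 0 ∧
      ‖(-(2 * (((a * c : ℝ) : ℂ) * (Complex.I * t) + ((b * d : ℝ) : ℂ))) /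
          ((1 : ℂ) + ((a ^ 2 + c ^ 2 : ℝ) : ℂ) * (Complex.I * t) +
            ((b ^ 2 + d ^ 2 : ℝ) : ℂ) +
            (((a * d - b * c) ^ 2 : ℝ) : ℂ) * (Complex.I * t)))‖ ^ 2 =
        (2 * b * d / (1 + b ^ 2 + d ^ 2)) ^ 2 := by
  intro t ht
  have hD : (0:ℝ) < 1 + b ^ 2 + d ^ 2 := by positivity
  have hden : ((1 : ℂ) + ((a ^ 2 + c ^ 2 : ℝ) : ℂ) * (Complex.I * t) + ((b ^ 2 + d ^ 2 : ℝ) : ℂ) +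
          (((a * d - b * c) ^ 2 : ℝ) : ℂ) * (Complex.I * t)) ≠ 0 := by
    intro h
    have := congrArg Complex.re h
    simp only [Complex.add_re, Complex.add_im, Complex.mul_re, Complex.mul_im, Complex.neg_re, Complex.neg_im, Complex.I_re, Complex.I_im, Complex.ofReal_re, Complex.ofReal_im, Complex.one_re, Complex.one_im, Complex.zero_re, Complex.zero_im, Complex.re_ofNat, Complex.im_ofNat, Complex.normSq_apply] at this
    nlinarith
  refine ⟨hden, ?_⟩
  rw [Complex.sq_norm, map_div₀]
  have hnum : Complex.normSq (-(2 * (((a * c : ℝ) : ℂ) * (Complex.I * t) + ((b * d : ℝ) : ℂ)))) =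
      4 * (b*d)^2 * (1 + t^2) := by
    simp only [Complex.add_re, Complex.add_im, Complex.mul_re, Complex.mul_im, Complex.neg_re, Complex.neg_im, Complex.I_re, Complex.I_im, Complex.ofReal_re, Complex.ofReal_im, Complex.one_re, Complex.one_im, Complex.zero_re, Complex.zero_im, Complex.re_ofNat, Complex.im_ofNat, Complex.normSq_apply]
    linear_combination (4 * t^2 * (a*c - b*d)) * h1
  have hd2 : Complex.normSq ((1 : ℂ) + ((a ^ 2 + c ^ 2 : ℝ) : ℂ) * (Complex.I * t) + ((b ^ 2 + d ^ 2 : ℝ) : ℂ) +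
          (((a * d - b * c) ^ 2 : ℝ) : ℂ) * (Complex.I * t)) = (1 + b^2 + d^2)^2 * (1 + t^2) := by
    simp only [Complex.add_re, Complex.add_im, Complex.mul_re, Complex.mul_im, Complex.neg_re, Complex.neg_im, Complex.I_re, Complex.I_im, Complex.ofReal_re, Complex.ofReal_im, Complex.one_re, Complex.one_im, Complex.zero_re, Complex.zero_im, Complex.re_ofNat, Complex.im_ofNat, Complex.normSq_apply]
    linear_combination (-(t^2) * ((1 + b^2 + d^2) + (a^2 + c^2 + (a*d - b*c)^2))) * h2
  rw [hnum, hd2]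
  have ht2 : (0:ℝ) < 1 + t^2 := by positivity
  field_simp
  ring
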